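/- arXiv:1812.04511 — 8 statements merged into one kernel-verified Lean document; each statement's English description precedes it below -/
import Mathlib

section
/- Let V be a finite-dimensional vector space over a field K and let ω : V × V → K be a nondegenerate alternating (skew-symmetric) bilinear form, with Π : V* × V* → K the inverse bilinear form on the dual space (i.e., Π(ω♭(v), ω♭(w)) = ω(v,w), where ω♭ : V → V* is the musical isomorphism induced by ω). Let V₁, V₂ ⊆ V be subspaces that are orthogonal complements of each other with respect to ω (V₂ = {v ∈ V : ω(v, V₁) = 0} and V₁ = {v ∈ V : ω(v, V₂) = 0}). Set W₁ := V₁° and W₂ := V₂°, the annihilators in V*. Then the radicals of the restricted forms Π|_{W₁×W₁} and Π|_{W₂×W₂} both equal W₁ ∩ W₂; in particular these two restricted forms have equal coranks (dimension of the radical). -/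
open Module

/-- The radical of the restriction of a bilinear form `B` on `V'` to a subspace `W`:
`{f ∈ W : B f g = 0 for all g ∈ W}`. -/
def bilinRestrictRadical {K V' : Type*} [Field K] [AddCommGroup V'] [Module K V']
    (B : V' →ₗ[K] V' →ₗ[K] K) (W : Submodule K V') : Submodule K V' where
  carrier := {f | f ∈ W ∧ ∀ g ∈ W, B f g = 0}
  add_mem' := by
    rintro a b ⟨haW, ha⟩ ⟨hbW, hb⟩
    exact ⟨W.add_mem haW hbW, fun g hg => by simp [ha g hg, hb g hg]⟩
  zero_mem' := ⟨W.zero_mem, fun g hg => by simp⟩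
  smul_mem' := by
    rintro c x ⟨hxW, hx⟩
    exact ⟨W.smul_mem c hxW, fun g hg => by simp [hx g hg]⟩

/-- Let `V` be a finite-dimensional vector space over a field `K`,
`ω` a nondegenerate alternating bilinear form on `V`, and `Π` the inverse bilinear form on the
dual space (`Π(ω♭ v, ω♭ w) = ω(v,w)`).  If `V₁, V₂ ⊆ V` are orthogonal complements of each
other with respect to `ω`, and `W₁ = V₁°`, `W₂ = V₂°` are the annihilators in `V*`, then the
radicals of the restrictions `Π|_{W₁×W₁}` and `Π|_{W₂×W₂}` both equal `W₁ ⊓ W₂`; in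
particular these restrictions have equal coranks. -/
theorem radical_restrict_annihilator_eq {K V : Type*} [Field K] [AddCommGroup V] [Module K V]
    [FiniteDimensional K V]
    (ω : V →ₗ[K] V →ₗ[K] K)
    (halt : ∀ v, ω v v = 0)
    (hnd : ∀ v, (∀ w, ω v w = 0) → v = 0)
    (P : Dual K V →ₗ[K] Dual K V →ₗ[K] K)
    (hP : ∀ v w, P (ω v) (ω w) = ω v w)
    (V₁ V₂ : Submodule K V)
    (hV₂ : ∀ v, v ∈ V₂ ↔ ∀ x ∈ V₁, ω v x = 0)
    (hV₁ : ∀ v, v ∈ V₁ ↔ ∀ x ∈ V₂, ω v x = 0) :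
    bilinRestrictRadical P V₁.dualAnnihilator
        = V₁.dualAnnihilator ⊓ V₂.dualAnnihilator ∧
    bilinRestrictRadical P V₂.dualAnnihilator
        = V₁.dualAnnihilator ⊓ V₂.dualAnnihilator ∧
    finrank K (bilinRestrictRadical P V₁.dualAnnihilator)
        = finrank K (bilinRestrictRadical P V₂.dualAnnihilator) := by
  have hinj : Function.Injective ω := by
    rw [← LinearMap.ker_eq_bot, Submodule.eq_bot_iff]
    intro v hv
    exact hnd v (fun w => by simpa using congrFun (congrArg DFunLike.coe hv) w)
  have hsurj : Function.Surjective ω :=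
    (LinearMap.injective_iff_surjective_of_finrank_eq_finrank
      (Subspace.dual_finrank_eq (K := K) (V := V)).symm).mp hinj
  have hmemA : ∀ (U₁ U₂ : Submodule K V),
      (∀ v, v ∈ U₂ ↔ ∀ x ∈ U₁, ω v x = 0) →
      ∀ v, ω v ∈ U₁.dualAnnihilator ↔ v ∈ U₂ := by
    intro U₁ U₂ h v
    rw [Submodule.mem_dualAnnihilator, h v]
  have key : ∀ (U₁ U₂ : Submodule K V),
      (∀ v, v ∈ U₂ ↔ ∀ x ∈ U₁, ω v x = 0) →
      (∀ v, v ∈ U₁ ↔ ∀ x ∈ U₂, ω v x = 0) →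
      bilinRestrictRadical P U₁.dualAnnihilator
        = U₁.dualAnnihilator ⊓ U₂.dualAnnihilator := by
    intro U₁ U₂ h₂ h₁
    ext f
    obtain ⟨v, rfl⟩ := hsurj f
    have hmem : ω v ∈ bilinRestrictRadical P U₁.dualAnnihilator ↔
        ω v ∈ U₁.dualAnnihilator ∧ ∀ g ∈ U₁.dualAnnihilator, P (ω v) g = 0 := Iff.rfl
    rw [hmem, Submodule.mem_inf, hmemA U₁ U₂ h₂, hmemA U₂ U₁ h₁]
    constructor
    · rintro ⟨hv₂, hrad⟩
      refine ⟨hv₂, (h₁ v).mpr ?_⟩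
      intro x hx
      have := hrad (ω x) ((hmemA U₁ U₂ h₂ x).mpr hx)
      rwa [hP] at this
    · rintro ⟨hv₂, hv₁⟩
      refine ⟨hv₂, ?_⟩
      intro g hg
      obtain ⟨w, rfl⟩ := hsurj g
      rw [hP]
      exact (h₁ v).mp hv₁ w ((hmemA U₁ U₂ h₂ w).mp hg)
  have e₁ := key V₁ V₂ hV₂ hV₁
  have e₂ := key V₂ V₁ hV₁ hV₂
  rw [inf_comm] at e₂
  exact ⟨e₁, e₂, by rw [e₁, e₂]⟩
end

section
/- Let 𝔤 be a Lie algebra over a field K which is the internal direct sum of subspaces V₁, …, V_s, let λ₁, …, λ_s ∈ K be pairwise distinct scalars, and let n : 𝔤 → 𝔤 be the linear operator with n(v) = λᵢ·v for v ∈ Vᵢ. If [Vᵢ, Vⱼ] ⊆ Vᵢ + Vⱼ for all i, j ∈ {1,…,s}, then n is an algebraic Nijenhuis operator, i.e., T_n(x,y) = 0 for all x, y ∈ 𝔤. -/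
/-- Let `𝔤` be a Lie algebra over a field `K` which is the internal direct
sum of subspaces `V 0, …, V (s-1)`, let `λ 0, …, λ (s-1)` be pairwise distinct scalars and let
`n : 𝔤 → 𝔤` be the linear operator acting on `V i` as `λ i • ·`.  If `⁅V i, V j⁆ ⊆ V i + V j`
for all `i, j`, then `n` is an algebraic Nijenhuis operator: `T_n(x,y) = 0` for all `x, y`. -/
theorem eignespace_decomposition_isAlgebraicNijenhuis {K : Type*} [Field K] {L : Type*}
    [LieRing L] [LieAlgebra K L] {s : ℕ} (V : Fin s → Submodule K L)
    (hV : DirectSum.IsInternal V) (lam : Fin s → K) (hlam : Function.Injective lam)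
    (n : L →ₗ[K] L) (hn : ∀ i, ∀ v ∈ V i, n v = lam i • v)
    (hbr : ∀ i j, ∀ x ∈ V i, ∀ y ∈ V j, ⁅x, y⁆ ∈ V i ⊔ V j) :
    ∀ x y : L, ⁅n x, n y⁆ - n (⁅n x, y⁆ + ⁅x, n y⁆ - n ⁅x, y⁆) = 0 := by
  set T : L → L → L := fun x y => ⁅n x, n y⁆ - n (⁅n x, y⁆ + ⁅x, n y⁆ - n ⁅x, y⁆) with hT
  have htop : (⨆ i, V i) = ⊤ := hV.submodule_iSup_eq_top
  have key : ∀ i j, ∀ x ∈ V i, ∀ y ∈ V j, T x y = 0 := by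
    intro i j x hx y hy
    obtain ⟨a, ha, b, hb, hab⟩ := Submodule.mem_sup.mp (hbr i j x hx y hy)
    have hbr' : ⁅x, y⁆ = a + b := hab.symm
    have h1 : n ⁅x, y⁆ = lam i • a + lam j • b := by
      rw [hbr', map_add, hn i a ha, hn j b hb]
    have h2 : n (n ⁅x, y⁆) = lam i • lam i • a + lam j • lam j • b := by
      rw [h1, map_add, map_smul, map_smul, hn i a ha, hn j b hb]
    simp only [hT, hn i x hx, hn j y hy, lie_smul, smul_lie, map_add, map_sub, map_smul]
    rw [h1, map_add, map_smul, map_smul, hn i a ha, hn j b hb, hbr']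
    module
  have addT : ∀ x x' y, T (x + x') y = T x y + T x' y := by
    intro x x' y
    simp only [hT, map_add, add_lie, lie_add, map_sub]
    abel
  have addT' : ∀ x y y', T x (y + y') = T x y + T x y' := by
    intro x y y'
    simp only [hT, map_add, add_lie, lie_add, map_sub]
    abel
  have zeroT : ∀ y, T 0 y = 0 := by intro y; simp [hT]
  have zeroT' : ∀ x, T x 0 = 0 := by intro x; simp [hT]
  have step1 : ∀ j, ∀ y ∈ V j, ∀ x, T x y = 0 := by
    intro j y hy x
    have hx : x ∈ ⨆ i, V i := htop ▸ Submodule.mem_top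
    refine Submodule.iSup_induction (motive := fun x => T x y = 0) V hx
      (fun i x hxi => key i j x hxi y hy) (zeroT y) ?_
    intro a b ha hb
    rw [addT, ha, hb, add_zero]
  intro x y
  have hy : y ∈ ⨆ j, V j := htop ▸ Submodule.mem_top
  refine Submodule.iSup_induction (motive := fun y => T x y = 0) V hy
    (fun j y hyj => step1 j y hyj x) (zeroT' x) ?_
  intro a b ha hb
  rw [addT', ha, hb, add_zero]
end

section
/- Let 𝔤 be a Lie algebra over a field K and let n : 𝔤 → 𝔤 be a diagonalizable algebraic Nijenhuis operator: 𝔤 is the internal direct sum of subspaces V₁, …, V_s, n(v) = λᵢ·v for v ∈ Vᵢ, where λ₁, …, λ_s ∈ K are pairwise distinct, and T_n = 0. Then for all i, j ∈ {1,…,s} the subspace Vᵢ + Vⱼ is a Lie subalgebra of 𝔤 (in particular each eigenspace Vᵢ is a Lie subalgebra). -/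
/-- Key lemma: the bracket of eigenvectors for eigenvalues `lam k`, `lam l` lies in
`V k ⊔ V l`. -/
theorem nijenhuis_key {K : Type*} [Field K] {L : Type*}
    [LieRing L] [LieAlgebra K L] {s : ℕ} (V : Fin s → Submodule K L)
    (hV : DirectSum.IsInternal V) (lam : Fin s → K) (hlam : Function.Injective lam)
    (n : L →ₗ[K] L) (hn : ∀ i, ∀ v ∈ V i, n v = lam i • v)
    (hN : ∀ x y : L, ⁅n x, n y⁆ - n (⁅n x, y⁆ + ⁅x, n y⁆ - n ⁅x, y⁆) = 0)
    (k l : Fin s) (x : L) (hx : x ∈ V k) (y : L) (hy : y ∈ V l) :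
    ⁅x, y⁆ ∈ V k ⊔ V l := by
  classical
  set z : L := ⁅x, y⁆ with hz
  -- the quadratic identity from the vanishing torsion
  have hid : (lam k * lam l) • z - (lam k + lam l) • n z + n (n z) = 0 := by
    have h := hN x y
    rw [hn k x hx, hn l y hy] at h
    simp only [lie_smul, smul_lie, map_add, map_sub, map_smul, smul_smul] at h
    rw [← h, ← hz]
    module
  -- decompose z along the direct sum
  obtain ⟨c, hc⟩ := hV.surjective z
  have hF : ∀ m, (c m : L) ∈ V m := fun m => (c m).2
  have hzsum : z = ∑ m, (c m : L) := by
    rw [← hc]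
    conv_lhs => rw [← DirectSum.sum_univ_of c]
    rw [map_sum]
    simp [DirectSum.coeAddMonoidHom_of]
  have hnz : n z = ∑ m, lam m • (c m : L) := by
    rw [hzsum, map_sum]
    exact Finset.sum_congr rfl fun m _ => hn m _ (hF m)
  have hnnz : n (n z) = ∑ m, (lam m * lam m) • (c m : L) := by
    rw [hnz, map_sum]
    refine Finset.sum_congr rfl fun m _ => ?_
    rw [map_smul, hn m _ (hF m), smul_smul]
  set q : Fin s → K := fun m => (lam m - lam k) * (lam m - lam l) with hq
  set d : DirectSum (Fin s) fun m => V m :=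
    DFinsupp.mapRange (fun m (v : V m) => q m • v) (fun m => smul_zero _) c with hd
  have hdapp : ∀ m, d m = q m • c m := fun m => DFinsupp.mapRange_apply _ _ c m
  have hw : (DirectSum.coeAddMonoidHom V) d = 0 := by
    conv_lhs => rw [← DirectSum.sum_univ_of d]
    rw [map_sum]
    simp only [DirectSum.coeAddMonoidHom_of, hdapp]
    have : ∑ m, ((q m • c m : V m) : L)
        = (lam k * lam l) • z - (lam k + lam l) • n z + n (n z) := by
      rw [hnnz, hnz, hzsum, Finset.smul_sum, Finset.smul_sum, ← Finset.sum_sub_distrib,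
        ← Finset.sum_add_distrib]
      refine Finset.sum_congr rfl fun m _ => ?_
      simp only [Submodule.coe_smul_of_tower, smul_smul, hq]
      rw [← sub_smul, ← add_smul]
      congr 1
      ring
    rw [this, hid]
  have hd0 : d = 0 := hV.injective (by rw [hw, map_zero])
  have hcomp : ∀ m, q m • c m = (0 : V m) := by
    intro m
    rw [← hdapp, hd0]
    rfl
  -- components outside {k, l} vanish
  have hvanish : ∀ m, m ≠ k → m ≠ l → (c m : L) = 0 := by
    intro m hmk hml
    have hqm : q m ≠ 0 := by
      apply mul_ne_zero <;> rw [sub_ne_zero] <;>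
        exact fun h => by first | exact hmk (hlam h) | exact hml (hlam h)
    have := hcomp m
    rw [smul_eq_zero] at this
    rcases this with h | h
    · exact absurd h hqm
    · exact congrArg Subtype.val h
  rw [hzsum]
  refine Submodule.sum_mem _ fun m _ => ?_
  by_cases hmk : m = k
  · exact Submodule.mem_sup_left (hmk ▸ hF m)
  by_cases hml : m = l
  · exact Submodule.mem_sup_right (hml ▸ hF m)
  · rw [hvanish m hmk hml]; exact Submodule.zero_mem _

/-- Let `𝔤` be a Lie algebra over a field `K` and `n : 𝔤 → 𝔤` a
diagonalizable algebraic Nijenhuis operator: `𝔤` is the internal direct sum of subspaces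
`V 0, …, V (s-1)`, `n` acts on `V i` as `λ i • ·` with pairwise distinct eigenvalues `λ i`,
and the Nijenhuis torsion of `n` vanishes.  Then each `V i + V j` (in particular each
eigenspace `V i`) is a Lie subalgebra of `𝔤`. -/
theorem eigenspace_sum_isLieSubalgebra_of_nijenhuis {K : Type*} [Field K] {L : Type*}
    [LieRing L] [LieAlgebra K L] {s : ℕ} (V : Fin s → Submodule K L)
    (hV : DirectSum.IsInternal V) (lam : Fin s → K) (hlam : Function.Injective lam)
    (n : L →ₗ[K] L) (hn : ∀ i, ∀ v ∈ V i, n v = lam i • v)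
    (hN : ∀ x y : L, ⁅n x, n y⁆ - n (⁅n x, y⁆ + ⁅x, n y⁆ - n ⁅x, y⁆) = 0) :
    ∀ i j, ∀ x ∈ V i ⊔ V j, ∀ y ∈ V i ⊔ V j, ⁅x, y⁆ ∈ V i ⊔ V j := by
  intro i j x hx y hy
  obtain ⟨a, ha, b, hb, rfl⟩ := Submodule.mem_sup.mp hx
  obtain ⟨c, hc, d, hd, rfl⟩ := Submodule.mem_sup.mp hy
  have key := nijenhuis_key V hV lam hlam n hn hN
  have h1 := key i i a ha c hc
  have h2 := key i j a ha d hd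
  have h3 := key j i b hb c hc
  have h4 := key j j b hb d hd
  rw [sup_idem] at h1 h4
  rw [sup_comm (V j) (V i)] at h3
  simp only [add_lie, lie_add]
  refine Submodule.add_mem _ (Submodule.add_mem _ ?_ ?_) (Submodule.add_mem _ ?_ ?_) <;>
    first
      | exact Submodule.mem_sup_left h1
      | exact h2
      | exact h3
      | exact Submodule.mem_sup_right h4
end

section
/- Let n ≥ 2 and write 2n×2n complex matrices in block form with respect to the index decomposition 2n = (n−1) + 1 + (n−1) + 1 (blocks numbered 1,2,3,4). Let 𝔨 ⊆ M_{2n}(ℂ) be the set of matrices Y whose only possibly nonzero blocks are Y₁₁ = Ã, Y₁₃ = B̃, Y₂₂ = t, Y₃₁ = C̃, Y₃₃ = −Ãᵀ, Y₄₄ = −t, where Ã, B̃, C̃ ∈ M_{n−1}(ℂ) with B̃ = B̃ᵀ and C̃ = C̃ᵀ, and t ∈ ℂ (so 𝔨 ≅ 𝔰𝔭(n−1,ℂ) ⊕ ℂ). Let A₀ ∈ M_{n−1}(ℂ) be the upper shift matrix ((A₀)_{i,i+1} = 1 for 1 ≤ i ≤ n−2, all other entries 0), let 𝟙 ∈ ℂ^{n−1}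 be the all-ones column vector, and let E ∈ M_{2n}(ℂ) be the matrix whose only nonzero blocks are E₁₁ = A₀, E₃₃ = A₀ᵀ, E₂₄ = 1 (a 1×1 block), E₁₂ = 𝟙 and E₂₁ = 𝟙ᵀ. Then the only Y ∈ 𝔨 with YE = EY is Y = 0. -/
open Matrix

/-- A 4×4 block matrix with blocks of sizes `(n-1, 1, n-1, 1)` (indices grouped as
`((Fin m ⊕ Unit) ⊕ (Fin m ⊕ Unit))`, blocks numbered 1,2,3,4). -/
def blk4 {m : ℕ}
    (B11 : Matrix (Fin m) (Fin m) ℂ) (B12 : Matrix (Fin m) Unit ℂ)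
    (B13 : Matrix (Fin m) (Fin m) ℂ) (B14 : Matrix (Fin m) Unit ℂ)
    (B21 : Matrix Unit (Fin m) ℂ) (B22 : Matrix Unit Unit ℂ)
    (B23 : Matrix Unit (Fin m) ℂ) (B24 : Matrix Unit Unit ℂ)
    (B31 : Matrix (Fin m) (Fin m) ℂ) (B32 : Matrix (Fin m) Unit ℂ)
    (B33 : Matrix (Fin m) (Fin m) ℂ) (B34 : Matrix (Fin m) Unit ℂ)
    (B41 : Matrix Unit (Fin m) ℂ) (B42 : Matrix Unit Unit ℂ)
    (B43 : Matrix Unit (Fin m) ℂ) (B44 : Matrix Unit Unit ℂ) :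
    Matrix ((Fin m ⊕ Unit) ⊕ (Fin m ⊕ Unit)) ((Fin m ⊕ Unit) ⊕ (Fin m ⊕ Unit)) ℂ :=
  fromBlocks (fromBlocks B11 B12 B21 B22) (fromBlocks B13 B14 B23 B24)
    (fromBlocks B31 B32 B41 B42) (fromBlocks B33 B34 B43 B44)

/-- The upper shift matrix `A₀` : `(A₀)_{i,i+1} = 1`, all other entries `0`. -/
def shiftM (m : ℕ) : Matrix (Fin m) (Fin m) ℂ :=
  Matrix.of fun i j => if (i : ℕ) + 1 = (j : ℕ) then 1 else 0

/-- The all-ones column vector `𝟙 ∈ ℂ^m`. -/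
def onesCol (m : ℕ) : Matrix (Fin m) Unit ℂ := Matrix.of fun _ _ => 1

/-- A scalar as a 1×1 matrix. -/
def scal (z : ℂ) : Matrix Unit Unit ℂ := Matrix.of fun _ _ => z

def colv (m k : ℕ) : Matrix (Fin m) Unit ℂ :=
  Matrix.of fun i _ => if (i : ℕ) + k < m then 1 else 0
def colw (m k : ℕ) : Matrix (Fin m) Unit ℂ :=
  Matrix.of fun i _ => if k ≤ (i : ℕ) then 1 else 0

lemma colv_zero (m : ℕ) : colv m 0 = onesCol m := by
  ext i j; simp [colv, onesCol, i.isLt]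

lemma colw_zero (m : ℕ) : colw m 0 = onesCol m := by
  ext i j; simp [colw, onesCol]

lemma shift_mul_colv (m k : ℕ) : shiftM m * colv m k = colv m (k+1) := by
  ext i j
  rw [mul_apply]
  simp only [shiftM, colv, of_apply, ite_mul, one_mul, zero_mul]
  rcases lt_or_ge ((i:ℕ)+1) m with h | h
  · rw [Finset.sum_eq_single (⟨(i:ℕ)+1, h⟩ : Fin m)]
    · rw [if_pos rfl, show ((⟨(i:ℕ)+1,h⟩ : Fin m) : ℕ) + k = (i:ℕ) + (k+1) from by simp; omega]
    · intro b _ hb; exact if_neg fun hc => hb (Fin.ext hc.symm)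
    · intro hmem; exact absurd (Finset.mem_univ _) hmem
  · rw [Finset.sum_eq_zero]
    · exact (if_neg (by omega)).symm
    · intro b _; exact if_neg (by omega)

lemma shiftT_mul_colw (m k : ℕ) : (shiftM m)ᵀ * colw m k = colw m (k+1) := by
  ext i j
  rw [mul_apply]
  simp only [shiftM, colw, transpose_apply, of_apply, ite_mul, one_mul, zero_mul]
  rcases Nat.eq_zero_or_pos (i:ℕ) with h | h
  · rw [Finset.sum_eq_zero]
    · exact (if_neg (by omega)).symm
    · intro b _; exact if_neg (by omega)
  · have hlt : (i:ℕ) - 1 < m := by omega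
    rw [Finset.sum_eq_single (⟨(i:ℕ)-1, hlt⟩ : Fin m)]
    · rw [if_pos (show (i:ℕ)-1+1 = (i:ℕ) by omega)]
      show (if k ≤ (i:ℕ)-1 then (1:ℂ) else 0) = _
      split_ifs <;> (first | rfl | (exfalso; omega))
    · intro b _ hb
      exact if_neg fun hc => hb (Fin.ext (show (b:ℕ) = _ by simp; omega))
    · intro hmem; exact absurd (Finset.mem_univ _) hmem

/-- single-column standard basis -/
def singleCol (m : ℕ) (j : Fin m) : Matrix (Fin m) Unit ℂ :=
  Matrix.of fun i _ => if i = j then 1 else 0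

lemma colv_decomp (m : ℕ) (j : Fin m) :
    colv m (m-1-(j:ℕ)) - colv m (m-(j:ℕ)) = singleCol m j := by
  ext i _
  simp only [colv, singleCol, Matrix.sub_apply, of_apply]
  have hj := j.isLt
  have hi := i.isLt
  simp only [Fin.ext_iff]
  split_ifs <;> (first | (exfalso; omega) | norm_num)

lemma colw_decomp (m : ℕ) (j : Fin m) :
    colw m (j:ℕ) - colw m ((j:ℕ)+1) = singleCol m j := by
  ext i _
  simp only [colw, singleCol, Matrix.sub_apply, of_apply]
  simp only [Fin.ext_iff]
  split_ifs <;> (first | (exfalso; omega) | norm_num)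

lemma mul_singleCol_eq_zero {m : ℕ} {M : Matrix (Fin m) (Fin m) ℂ}
    (h : ∀ j : Fin m, M * singleCol m j = 0) : M = 0 := by
  ext i j
  have := congrFun (congrFun (h j) i) ()
  rw [mul_apply] at this
  simpa [singleCol, Finset.sum_ite_eq'] using this

/-- key lemma, colv version -/
lemma key1 {m : ℕ} (M P : Matrix (Fin m) (Fin m) ℂ)
    (h : M * shiftM m = P * M) (hu : M * onesCol m = 0) : M = 0 := by
  have hv : ∀ k, M * colv m k = 0 := by
    intro k; induction k with
    | zero => rw [colv_zero]; exact hu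
    | succ k ih =>
        rw [← shift_mul_colv, ← Matrix.mul_assoc, h, Matrix.mul_assoc, ih, Matrix.mul_zero]
  refine mul_singleCol_eq_zero fun j => ?_
  rw [← colv_decomp, Matrix.mul_sub, hv, hv, sub_zero]

/-- key lemma, colw version -/
lemma key2 {m : ℕ} (M P : Matrix (Fin m) (Fin m) ℂ)
    (h : M * (shiftM m)ᵀ = P * M) (hu : M * onesCol m = 0) : M = 0 := by
  have hv : ∀ k, M * colw m k = 0 := by
    intro k; induction k with
    | zero => rw [colw_zero]; exact hu
    | succ k ih =>
        rw [← shiftT_mul_colw, ← Matrix.mul_assoc, h, Matrix.mul_assoc, ih, Matrix.mul_zero]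
  refine mul_singleCol_eq_zero fun j => ?_
  rw [← colw_decomp, Matrix.mul_sub, hv, hv, sub_zero]

/-- With respect to the block decomposition `2n = (n−1) + 1 + (n−1) + 1`,
let `Y ∈ 𝔨 ≅ 𝔰𝔭(n−1,ℂ) ⊕ ℂ` have blocks `Y₁₁ = Ã`, `Y₁₃ = B̃`, `Y₂₂ = t`, `Y₃₁ = C̃`,
`Y₃₃ = −Ãᵀ`, `Y₄₄ = −t` with `B̃ = B̃ᵀ`, `C̃ = C̃ᵀ`, and let `E` have blocks `E₁₁ = A₀`
(the upper shift matrix), `E₃₃ = A₀ᵀ`, `E₂₄ = 1`, `E₁₂ = 𝟙`, `E₂₁ = 𝟙ᵀ`.  If `Y` commutes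
with `E` then `Y = 0`. -/
theorem centralizer_in_k_trivial_case_a (n : ℕ) (hn : 2 ≤ n)
    (A B C : Matrix (Fin (n - 1)) (Fin (n - 1)) ℂ) (t : ℂ)
    (hB : B = Bᵀ) (hC : C = Cᵀ)
    (Y : Matrix ((Fin (n-1) ⊕ Unit) ⊕ (Fin (n-1) ⊕ Unit))
          ((Fin (n-1) ⊕ Unit) ⊕ (Fin (n-1) ⊕ Unit)) ℂ)
    (hY : Y = blk4 A 0 B 0
                0 (scal t) 0 0
                C 0 (-Aᵀ) 0
                0 0 0 (scal (-t)))
    (E : Matrix ((Fin (n-1) ⊕ Unit) ⊕ (Fin (n-1) ⊕ Unit))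
          ((Fin (n-1) ⊕ Unit) ⊕ (Fin (n-1) ⊕ Unit)) ℂ)
    (hE : E = blk4 (shiftM (n-1)) (onesCol (n-1)) 0 0
                (onesCol (n-1))ᵀ 0 0 (scal 1)
                0 0 (shiftM (n-1))ᵀ 0
                0 0 0 0)
    (hcomm : Y * E = E * Y) :
    Y = 0 := by
  subst hY; subst hE
  simp only [blk4, fromBlocks_multiply, Matrix.fromBlocks_add, Matrix.fromBlocks_inj,
    Matrix.mul_zero, Matrix.zero_mul, add_zero, zero_add] at hcomm
  obtain ⟨⟨hAS, hAu, -, -⟩, ⟨hBS, -, hBu, ht⟩, ⟨hCS, hCu, -, -⟩, -⟩ := hcomm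
  have ht0 : t = 0 := by
    have h2 := congrFun (congrFun ht ()) ()
    simp [scal, mul_apply] at h2
    linear_combination h2/2
  subst ht0
  have hs0 : scal (0:ℂ) = 0 := by ext; simp [scal]
  rw [hs0, Matrix.mul_zero] at hAu
  have hBu' : B * onesCol (n-1) = 0 := by
    have h3 := congrArg Matrix.transpose hBu
    rw [Matrix.transpose_zero, Matrix.transpose_mul, Matrix.transpose_transpose, ← hB] at h3
    exact h3.symm
  have hA0 := key1 A _ hAS hAu
  have hB0 := key2 B _ hBS hBu'
  have hC0 := key1 C _ hCS hCu
  subst hA0; subst hB0; subst hC0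
  simp only [blk4, hs0, neg_zero, Matrix.transpose_zero, Matrix.fromBlocks_zero]
end

section
/- Let n ≥ 1. Let J ∈ M_{n+1}(ℂ) be the tridiagonal skew-symmetric matrix with J_{i,i+1} = 1 and J_{i+1,i} = −1 for 1 ≤ i ≤ n, and all other entries 0, and let E ∈ M_{2n+2}(ℂ) be the block matrix with blocks E = [[0, J],[J, 0]] (with respect to the decomposition 2n+2 = (n+1)+(n+1)). For A ∈ M_n(ℂ), let W_A ∈ M_{n+1}(ℂ) be the block-diagonal matrix with blocks [[0, 0],[0, A]] (with respect to (n+1) = 1+n), and let Y_A ∈ M_{2n+2}(ℂ) be the block-diagonal matrix with blocks [[W_A, 0],[0, −W_Aᵀ]]. Then Y_A E = E Y_A implies A = 0. -/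
open Matrix

/-- The tridiagonal skew-symmetric matrix `J ∈ M_{n+1}(ℂ)` with `J_{i,i+1} = 1`,
`J_{i+1,i} = −1` and all other entries `0`. -/
def Jmat (n : ℕ) : Matrix (Fin (n + 1)) (Fin (n + 1)) ℂ :=
  Matrix.of fun i j =>
    if (i : ℕ) + 1 = (j : ℕ) then 1 else if (j : ℕ) + 1 = (i : ℕ) then -1 else 0

/-- For `A ∈ M_n(ℂ)`, the block-diagonal matrix `W_A = [[0,0],[0,A]] ∈ M_{n+1}(ℂ)`
(with respect to `n+1 = 1+n`). -/
def WA {n : ℕ} (A : Matrix (Fin n) (Fin n) ℂ) : Matrix (Fin (n + 1)) (Fin (n + 1)) ℂ :=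
  Matrix.of fun i j =>
    Fin.cases (motive := fun _ => ℂ) 0
      (fun i' => Fin.cases (motive := fun _ => ℂ) 0 (fun j' => A i' j') j) i

def Wfun {n : ℕ} (A : Matrix (Fin n) (Fin n) ℂ) : ℕ → ℕ → ℂ :=
  fun i j => if h : 1 ≤ i ∧ i ≤ n ∧ 1 ≤ j ∧ j ≤ n then
    A ⟨i-1, by omega⟩ ⟨j-1, by omega⟩ else 0

variable {n : ℕ} {A : Matrix (Fin n) (Fin n) ℂ}

lemma Wfun_zl (j : ℕ) : Wfun A 0 j = 0 := dif_neg (by omega)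
lemma Wfun_zr (i : ℕ) : Wfun A i 0 = 0 := dif_neg (by omega)
lemma Wfun_tl {i : ℕ} (h : n < i) (j : ℕ) : Wfun A i j = 0 := dif_neg (by omega)
lemma Wfun_tr (i : ℕ) {j : ℕ} (h : n < j) : Wfun A i j = 0 := dif_neg (by omega)

lemma WA_apply (i j : Fin (n+1)) : WA A i j = Wfun A i j := by
  unfold WA
  simp only [of_apply]
  refine Fin.cases ?_ ?_ i
  · simp [Wfun_zl]
  · intro i'
    refine Fin.cases ?_ ?_ j
    · simp [Wfun_zr]
    · intro j'
      simp only [Fin.cases_succ, Fin.val_succ]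
      rw [Wfun, dif_pos ⟨by omega, by omega, by omega, by omega⟩]
      congr 1

lemma sum_ite_val (m : ℕ) (f : Fin (n+1) → ℂ) :
    (∑ k : Fin (n+1), if (k : ℕ) = m then f k else 0) =
      if h : m < n + 1 then f ⟨m, h⟩ else 0 := by
  split
  next h =>
    rw [Finset.sum_eq_single (⟨m, h⟩ : Fin (n+1))]
    · simp
    · intro k _ hk
      exact if_neg fun hc => hk (Fin.ext hc)
    · intro h'; exact absurd (Finset.mem_univ _) h'
  next h =>
    refine Finset.sum_eq_zero fun k _ => if_neg fun hc => ?_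
    exact h (hc ▸ k.isLt)

lemma sum_left (g : ℕ → ℂ) (h0 : g 0 = 0) (ht : ∀ m, n < m → g m = 0) (i : Fin (n+1)) :
    (∑ k : Fin (n+1), Jmat n i k * g k) = g ((i:ℕ)+1) - g ((i:ℕ)-1) := by
  have key : ∀ k : Fin (n+1), Jmat n i k * g k =
      (if (k:ℕ) = (i:ℕ)+1 then g (k:ℕ) else 0) - (if (k:ℕ)+1 = (i:ℕ) then g (k:ℕ) else 0) := by
    intro k
    unfold Jmat
    simp only [of_apply]
    split_ifs <;> first | omega | ring1
  rw [Finset.sum_congr rfl fun k _ => key k, Finset.sum_sub_distrib,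
    sum_ite_val ((i:ℕ)+1) (fun k => g (k:ℕ))]
  have h2 : (∑ k : Fin (n+1), if (k:ℕ)+1 = (i:ℕ) then g (k:ℕ) else 0) = g ((i:ℕ)-1) := by
    rcases Nat.eq_zero_or_pos (i:ℕ) with hi | hi
    · rw [hi]
      simp [h0]
    · have step : (∑ k : Fin (n+1), if (k:ℕ)+1 = (i:ℕ) then g (k:ℕ) else 0)
          = ∑ k : Fin (n+1), if (k:ℕ) = (i:ℕ)-1 then g (k:ℕ) else 0 :=
        Finset.sum_congr rfl fun k _ => if_congr (by omega) rfl rfl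
      rw [step, sum_ite_val ((i:ℕ)-1) (fun k => g (k:ℕ)), dif_pos (by omega)]
  rw [h2]
  congr 1
  split
  · rfl
  · exact (ht _ (by omega)).symm

lemma sum_right (g : ℕ → ℂ) (h0 : g 0 = 0) (ht : ∀ m, n < m → g m = 0) (j : Fin (n+1)) :
    (∑ k : Fin (n+1), g k * Jmat n k j) = g ((j:ℕ)-1) - g ((j:ℕ)+1) := by
  have key : ∀ k : Fin (n+1), g k * Jmat n k j =
      (if (k:ℕ)+1 = (j:ℕ) then g (k:ℕ) else 0) - (if (k:ℕ) = (j:ℕ)+1 then g (k:ℕ) else 0) := by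
    intro k
    unfold Jmat
    simp only [of_apply]
    split_ifs <;> first | omega | ring1
  rw [Finset.sum_congr rfl fun k _ => key k, Finset.sum_sub_distrib,
    sum_ite_val ((j:ℕ)+1) (fun k => g (k:ℕ))]
  have h2 : (∑ k : Fin (n+1), if (k:ℕ)+1 = (j:ℕ) then g (k:ℕ) else 0) = g ((j:ℕ)-1) := by
    rcases Nat.eq_zero_or_pos (j:ℕ) with hj | hj
    · rw [hj]
      simp [h0]
    · have step : (∑ k : Fin (n+1), if (k:ℕ)+1 = (j:ℕ) then g (k:ℕ) else 0)
          = ∑ k : Fin (n+1), if (k:ℕ) = (j:ℕ)-1 then g (k:ℕ) else 0 :=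
        Finset.sum_congr rfl fun k _ => if_congr (by omega) rfl rfl
      rw [step, sum_ite_val ((j:ℕ)-1) (fun k => g (k:ℕ)), dif_pos (by omega)]
  rw [h2]
  congr 1
  split
  · rfl
  · exact (ht _ (by omega)).symm

/-- Let `E = [[0,J],[J,0]] ∈ M_{2n+2}(ℂ)` (blocks of size `n+1`) with `J`
the tridiagonal skew-symmetric matrix, and for `A ∈ M_n(ℂ)` let
`Y_A = [[W_A, 0],[0, −W_Aᵀ]]` with `W_A = [[0,0],[0,A]]`.  If `Y_A` commutes with `E`, then
`A = 0`. -/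
theorem centralizer_in_k_trivial_case_b (n : ℕ) (hn : 1 ≤ n)
    (A : Matrix (Fin n) (Fin n) ℂ)
    (Y E : Matrix (Fin (n+1) ⊕ Fin (n+1)) (Fin (n+1) ⊕ Fin (n+1)) ℂ)
    (hY : Y = fromBlocks (WA A) 0 0 (-(WA A)ᵀ))
    (hE : E = fromBlocks 0 (Jmat n) (Jmat n) 0)
    (hcomm : Y * E = E * Y) :
    A = 0 := by
  subst hY hE
  rw [fromBlocks_multiply, fromBlocks_multiply] at hcomm
  simp only [Matrix.mul_zero, Matrix.zero_mul, add_zero, zero_add] at hcomm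
  have h1 := congrArg Matrix.toBlocks₁₂ hcomm
  have h2 := congrArg Matrix.toBlocks₂₁ hcomm
  simp only [toBlocks_fromBlocks₁₂, toBlocks_fromBlocks₂₁] at h1 h2
  -- h1 : WA A * Jmat n = Jmat n * (-(WA A)ᵀ)
  -- h2 : -(WA A)ᵀ * Jmat n = Jmat n * WA A
  have E1 : ∀ i j : ℕ, i ≤ n → j ≤ n →
      Wfun A i (j-1) - Wfun A i (j+1) = Wfun A j (i-1) - Wfun A j (i+1) := by
    intro i j hi hj
    have h := congrFun (congrFun h1 ⟨i, by omega⟩) ⟨j, by omega⟩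
    rw [mul_apply, mul_apply] at h
    rw [Finset.sum_congr rfl (fun k _ => by rw [WA_apply])] at h
    rw [sum_right (fun m => Wfun A i m) (Wfun_zr _) (fun m hm => Wfun_tr _ hm)] at h
    rw [Finset.sum_congr rfl (fun k _ => by
      rw [show (-(WA A)ᵀ) k (⟨j, by omega⟩ : Fin (n+1)) = -(Wfun A j (k:ℕ)) by
        simp [transpose_apply, neg_apply, WA_apply]])] at h
    rw [show (∑ k : Fin (n+1), Jmat n (⟨i, by omega⟩ : Fin (n+1)) k * -Wfun A j (k:ℕ))
        = ∑ k : Fin (n+1), Jmat n (⟨i, by omega⟩ : Fin (n+1)) k * (fun m => -Wfun A j m) (k:ℕ)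
        from rfl,
      sum_left (fun m => -Wfun A j m) (by simp [Wfun_zr]) (fun m hm => by simp [Wfun_tr _ hm])] at h
    simp only at h
    linear_combination h
  have E2 : ∀ i j : ℕ, i ≤ n → j ≤ n →
      Wfun A (i+1) j - Wfun A (i-1) j = Wfun A (j+1) i - Wfun A (j-1) i := by
    intro i j hi hj
    have h := congrFun (congrFun h2 ⟨i, by omega⟩) ⟨j, by omega⟩
    rw [mul_apply, mul_apply] at h
    rw [Finset.sum_congr rfl (fun k _ => by
      rw [show (-(WA A)ᵀ) (⟨i, by omega⟩ : Fin (n+1)) k = -(Wfun A (k:ℕ) i) by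
        simp [transpose_apply, neg_apply, WA_apply]])] at h
    rw [show (∑ k : Fin (n+1), -Wfun A (k:ℕ) i * Jmat n k (⟨j, by omega⟩ : Fin (n+1)))
        = ∑ k : Fin (n+1), (fun m => -Wfun A m i) (k:ℕ) * Jmat n k (⟨j, by omega⟩ : Fin (n+1))
        from rfl,
      sum_right (fun m => -Wfun A m i) (by simp [Wfun_zl]) (fun m hm => by simp [Wfun_tl hm])] at h
    rw [Finset.sum_congr rfl (fun k _ => by rw [WA_apply])] at h
    rw [sum_left (fun m => Wfun A m j) (Wfun_zl _) (fun m hm => Wfun_tl hm _)] at h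
    simp only at h
    linear_combination -h
  have key : ∀ k j : ℕ, Wfun A k j = 0 ∧ Wfun A j k = 0 := by
    intro k
    induction k using Nat.strong_induction_on with
    | _ k ih =>
      rcases k with _ | k
      · exact fun j => ⟨Wfun_zl j, Wfun_zr j⟩
      · intro j
        constructor
        · by_cases hk : k + 1 ≤ n
          · by_cases hj : j ≤ n
            · have h := E2 k j (by omega) hj
              rw [(ih (k-1) (by omega) j).1, (ih k (by omega) (j+1)).2,
                (ih k (by omega) (j-1)).2] at h
              linear_combination h
            · exact Wfun_tr _ (by omega)
          · exact Wfun_tl (by omega) _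
        · by_cases hk : k + 1 ≤ n
          · by_cases hj : j ≤ n
            · have h := E1 k j (by omega) hj
              rw [(ih k (by omega) (j-1)).1, (ih k (by omega) (j+1)).1,
                (ih (k-1) (by omega) j).2] at h
              linear_combination h
            · exact Wfun_tl (by omega) _
          · exact Wfun_tr _ (by omega)
  ext i j
  have h := (key ((i:ℕ)+1) ((j:ℕ)+1)).1
  rw [Wfun, dif_pos ⟨by omega, by omega, by omega, by omega⟩] at h
  simpa using h
end

section
/- Let n ≥ 2 and write 2n×2n complex matrices in block form with respect to the decomposition 2n = (n−1)+1+(n−1)+1 (blocks numbered 1,2,3,4). Inside 𝔰𝔲(2n) = {X ∈ M_{2n}(ℂ) : X* = −X, tr X = 0}, define: 𝔨^⊥ as the set of matrices X with blocks X₁₁ = Z₁, X₁₂ = v, X₁₃ = Z₂, X₁₄ = u, X₂₁ = −v̄ᵀ, X₂₂ = a, X₂₃ = u₁ᵀ, X₂₄ = z, X₃₁ = Z̄₂, X₃₂ = −ū₁, X₃₃ = −Z̄₁, X₃₄ = v₁, X₄₁ = −ūᵀ, X₄₂ = −z̄, X₄₃ = −v̄₁ᵀ, X₄₄ = a, where Z₁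 = −Z̄₁ᵀ, Z₂ = −Z₂ᵀ, v, u, v₁, u₁ ∈ ℂ^{n−1}, z ∈ ℂ, a = −tr Z₁; 𝔨₁ as the subset of such X with Z₁ = 0, Z₂ = 0, a = 0, and v₁ = v̄, u₁ = u (i.e., blocks X₁₂ = v, X₁₄ = u, X₂₃ = uᵀ, X₂₄ = z, X₃₂ = −ū, X₃₄ = v̄, X₂₁ = −v̄ᵀ, X₄₁ = −ūᵀ, X₄₂ = −z̄, X₄₃ = −vᵀ); and 𝔨₂ as the subset with u = 0 and z = 0 (blocks X₁₁ = Z₁, X₁₂ = v₁, X₁₃ = Z₂, X₂₁ = −v̄₁ᵀ, X₂₂ = a, X₂₃ = u₁ᵀ, X₃₁ = Z̄₂, X₃₂ = −ū₁, X₃₃ = −Z̄₁, X₄₄ = a, with a = −tr Z₁). Then 𝔨^⊥ is the internal direct sum of 𝔨₁ and 𝔨₂: every X ∈ 𝔨^⊥ is uniquely the sum of an element of 𝔨₁ and an element of 𝔨₂. -/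
open Matrix

namespace Stmt12

/-- Entrywise complex conjugation of a matrix. -/
def mconj {α β : Type*} (M : Matrix α β ℂ) : Matrix α β ℂ := M.map (starRingEnd ℂ)

/-- Entrywise complex conjugation of a vector. -/
def conjV {m : ℕ} (v : Fin m → ℂ) : Fin m → ℂ := fun i => starRingEnd ℂ (v i)

/-- A vector as a column matrix. -/
def colV {m : ℕ} (v : Fin m → ℂ) : Matrix (Fin m) Unit ℂ := Matrix.of fun i _ => v i

/-- A vector as a row matrix. -/
def rowV {m : ℕ} (v : Fin m → ℂ) : Matrix Unit (Fin m) ℂ := Matrix.of fun _ j => v j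

/-- A scalar as a 1×1 matrix. -/
def scal (z : ℂ) : Matrix Unit Unit ℂ := Matrix.of fun _ _ => z

/-- A 4×4 block matrix with blocks of sizes `(n-1, 1, n-1, 1)`. -/
def blk4 {m : ℕ}
    (B11 : Matrix (Fin m) (Fin m) ℂ) (B12 : Matrix (Fin m) Unit ℂ)
    (B13 : Matrix (Fin m) (Fin m) ℂ) (B14 : Matrix (Fin m) Unit ℂ)
    (B21 : Matrix Unit (Fin m) ℂ) (B22 : Matrix Unit Unit ℂ)
    (B23 : Matrix Unit (Fin m) ℂ) (B24 : Matrix Unit Unit ℂ)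
    (B31 : Matrix (Fin m) (Fin m) ℂ) (B32 : Matrix (Fin m) Unit ℂ)
    (B33 : Matrix (Fin m) (Fin m) ℂ) (B34 : Matrix (Fin m) Unit ℂ)
    (B41 : Matrix Unit (Fin m) ℂ) (B42 : Matrix Unit Unit ℂ)
    (B43 : Matrix Unit (Fin m) ℂ) (B44 : Matrix Unit Unit ℂ) :
    Matrix ((Fin m ⊕ Unit) ⊕ (Fin m ⊕ Unit)) ((Fin m ⊕ Unit) ⊕ (Fin m ⊕ Unit)) ℂ :=
  fromBlocks (fromBlocks B11 B12 B21 B22) (fromBlocks B13 B14 B23 B24)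
    (fromBlocks B31 B32 B41 B42) (fromBlocks B33 B34 B43 B44)

/-- The general matrix shape of elements of `𝔨^⊥ ⊆ 𝔰𝔲(2n)`, with blocks (w.r.t.
`2n = (n−1)+1+(n−1)+1`): `X₁₁ = Z₁`, `X₁₂ = v`, `X₁₃ = Z₂`, `X₁₄ = u`, `X₂₁ = −v̄ᵀ`,
`X₂₂ = a`, `X₂₃ = u₁ᵀ`, `X₂₄ = z`, `X₃₁ = Z̄₂`, `X₃₂ = −ū₁`, `X₃₃ = −Z̄₁`, `X₃₄ = v₁`,
`X₄₁ = −ūᵀ`, `X₄₂ = −z̄`, `X₄₃ = −v̄₁ᵀ`, `X₄₄ = a`. -/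
def kperpM {m : ℕ} (Z₁ Z₂ : Matrix (Fin m) (Fin m) ℂ) (v u v₁ u₁ : Fin m → ℂ) (z a : ℂ) :
    Matrix ((Fin m ⊕ Unit) ⊕ (Fin m ⊕ Unit)) ((Fin m ⊕ Unit) ⊕ (Fin m ⊕ Unit)) ℂ :=
  blk4 Z₁ (colV v) Z₂ (colV u)
    (-rowV (conjV v)) (scal a) (rowV u₁) (scal z)
    (mconj Z₂) (-colV (conjV u₁)) (-(mconj Z₁)) (colV v₁)
    (-rowV (conjV u)) (scal (-(starRingEnd ℂ z))) (-rowV (conjV v₁)) (scal a)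

/-- The subspace `𝔨^⊥`: matrices `kperpM Z₁ Z₂ v u v₁ u₁ z a` with `Z₁` skew-Hermitian,
`Z₂` skew-symmetric and `a = −tr Z₁`. -/
def kperp (m : ℕ) : Set (Matrix ((Fin m ⊕ Unit) ⊕ (Fin m ⊕ Unit))
    ((Fin m ⊕ Unit) ⊕ (Fin m ⊕ Unit)) ℂ) :=
  {X | ∃ (Z₁ Z₂ : Matrix (Fin m) (Fin m) ℂ) (v u v₁ u₁ : Fin m → ℂ) (z a : ℂ),
    Z₁ = -(mconj Z₁)ᵀ ∧ Z₂ = -Z₂ᵀ ∧ a = -Z₁.trace ∧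
    X = kperpM Z₁ Z₂ v u v₁ u₁ z a}

/-- The subspace `𝔨₁ = 𝔤₁ ∩ 𝔨^⊥`: elements of `𝔨^⊥` with
`Z₁ = 0`, `Z₂ = 0`, `a = 0`, `v₁ = v̄` and `u₁ = u`. -/
def k1 (m : ℕ) : Set (Matrix ((Fin m ⊕ Unit) ⊕ (Fin m ⊕ Unit))
    ((Fin m ⊕ Unit) ⊕ (Fin m ⊕ Unit)) ℂ) :=
  {X | ∃ (v u : Fin m → ℂ) (z : ℂ), X = kperpM 0 0 v u (conjV v) u z 0}

/-- The subspace `𝔨₂ = 𝔤₂ ∩ 𝔨^⊥`: elements of `𝔨^⊥` with `u = 0`, `z = 0`, `v₁ = 0`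
(the remaining vector parameters being `v₁` (in the `X₁₂` slot) and `u₁`), `a = −tr Z₁`. -/
def k2 (m : ℕ) : Set (Matrix ((Fin m ⊕ Unit) ⊕ (Fin m ⊕ Unit))
    ((Fin m ⊕ Unit) ⊕ (Fin m ⊕ Unit)) ℂ) :=
  {X | ∃ (Z₁ Z₂ : Matrix (Fin m) (Fin m) ℂ) (v₁ u₁ : Fin m → ℂ) (a : ℂ),
    Z₁ = -(mconj Z₁)ᵀ ∧ Z₂ = -Z₂ᵀ ∧ a = -Z₁.trace ∧
    X = kperpM Z₁ Z₂ v₁ 0 0 u₁ 0 a}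

lemma conjV_conjV {m : ℕ} (v : Fin m → ℂ) : conjV (conjV v) = v := by
  funext i; simp [conjV]

lemma conjV_add {m : ℕ} (v w : Fin m → ℂ) : conjV (v + w) = conjV v + conjV w := by
  funext i; simp [conjV]

lemma kperpM_add {m : ℕ} (Z₁ Z₂ Z₁' Z₂' : Matrix (Fin m) (Fin m) ℂ)
    (v u v₁ u₁ v' u' v₁' u₁' : Fin m → ℂ) (z a z' a' : ℂ) :
    kperpM Z₁ Z₂ v u v₁ u₁ z a + kperpM Z₁' Z₂' v' u' v₁' u₁' z' a' =
      kperpM (Z₁ + Z₁') (Z₂ + Z₂') (v + v') (u + u') (v₁ + v₁') (u₁ + u₁')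
        (z + z') (a + a') := by
  ext i j
  rcases i with (i | i) | (i | i) <;> rcases j with (j | j) | (j | j) <;>
    simp only [kperpM, blk4, Matrix.add_apply, Matrix.fromBlocks, Matrix.of_apply,
      Sum.elim_inl, Sum.elim_inr, Matrix.neg_apply, mconj, Matrix.map_apply,
      conjV, colV, rowV, scal, Pi.add_apply, map_add] <;> ring

lemma kperpM_inj {m : ℕ} {Z₁ Z₂ Z₁' Z₂' : Matrix (Fin m) (Fin m) ℂ}
    {v u v₁ u₁ v' u' v₁' u₁' : Fin m → ℂ} {z a z' a' : ℂ}
    (h : kperpM Z₁ Z₂ v u v₁ u₁ z a = kperpM Z₁' Z₂' v' u' v₁' u₁' z' a') :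
    Z₁ = Z₁' ∧ Z₂ = Z₂' ∧ v = v' ∧ u = u' ∧ v₁ = v₁' ∧ u₁ = u₁' ∧ z = z' ∧ a = a' := by
  refine ⟨?_, ?_, ?_, ?_, ?_, ?_, ?_, ?_⟩
  · ext i j
    have := congrFun (congrFun h (Sum.inl (Sum.inl i))) (Sum.inl (Sum.inl j))
    simpa [kperpM, blk4, Matrix.fromBlocks] using this
  · ext i j
    have := congrFun (congrFun h (Sum.inl (Sum.inl i))) (Sum.inr (Sum.inl j))
    simpa [kperpM, blk4, Matrix.fromBlocks] using this
  · funext i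
    have := congrFun (congrFun h (Sum.inl (Sum.inl i))) (Sum.inl (Sum.inr ()))
    simpa [kperpM, blk4, colV, Matrix.fromBlocks] using this
  · funext i
    have := congrFun (congrFun h (Sum.inl (Sum.inl i))) (Sum.inr (Sum.inr ()))
    simpa [kperpM, blk4, colV, Matrix.fromBlocks] using this
  · funext i
    have := congrFun (congrFun h (Sum.inr (Sum.inl i))) (Sum.inr (Sum.inr ()))
    simpa [kperpM, blk4, colV, Matrix.fromBlocks] using this
  · funext j
    have := congrFun (congrFun h (Sum.inl (Sum.inr ()))) (Sum.inr (Sum.inl j))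
    simpa [kperpM, blk4, rowV, Matrix.fromBlocks] using this
  · have := congrFun (congrFun h (Sum.inl (Sum.inr ()))) (Sum.inr (Sum.inr ()))
    simpa [kperpM, blk4, scal, Matrix.fromBlocks] using this
  · have := congrFun (congrFun h (Sum.inl (Sum.inr ()))) (Sum.inl (Sum.inr ()))
    simpa [kperpM, blk4, scal, Matrix.fromBlocks] using this

/-- `𝔨^⊥` is the internal direct sum of `𝔨₁` and `𝔨₂`: every `X ∈ 𝔨^⊥`
is uniquely the sum of an element of `𝔨₁` and an element of `𝔨₂`. -/
theorem kperp_directSum_case_a (n : ℕ) (hn : 2 ≤ n) :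
    ∀ X ∈ kperp (n - 1),
      ∃! p : Matrix ((Fin (n-1) ⊕ Unit) ⊕ (Fin (n-1) ⊕ Unit))
              ((Fin (n-1) ⊕ Unit) ⊕ (Fin (n-1) ⊕ Unit)) ℂ ×
             Matrix ((Fin (n-1) ⊕ Unit) ⊕ (Fin (n-1) ⊕ Unit))
              ((Fin (n-1) ⊕ Unit) ⊕ (Fin (n-1) ⊕ Unit)) ℂ,
        p.1 ∈ k1 (n - 1) ∧ p.2 ∈ k2 (n - 1) ∧ X = p.1 + p.2 := by
  rintro X ⟨Z₁, Z₂, v, u, v₁, u₁, z, a, h1, h2, h3, rfl⟩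
  refine ⟨(kperpM 0 0 (conjV v₁) u v₁ u z 0,
           kperpM Z₁ Z₂ (v - conjV v₁) 0 0 (u₁ - u) 0 a), ⟨?_, ?_, ?_⟩, ?_⟩
  · exact ⟨conjV v₁, u, z, by rw [conjV_conjV]⟩
  · exact ⟨Z₁, Z₂, v - conjV v₁, u₁ - u, a, h1, h2, h3, rfl⟩
  · have hv : conjV v₁ + (v - conjV v₁) = v := by abel
    have hu : u + (u₁ - u) = u₁ := by abel
    rw [kperpM_add, zero_add, zero_add, hv, add_zero, add_zero, hu, add_zero, zero_add]
  · rintro ⟨A, B⟩ ⟨⟨p, q, w, rfl⟩, ⟨Z₁', Z₂', r, s, a', hZ1', hZ2', ha', rfl⟩, hSum⟩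
    rw [kperpM_add] at hSum
    obtain ⟨e1, e2, e3, e4, e5, e6, e7, e8⟩ := kperpM_inj hSum
    have hcp : conjV p = v₁ := by rw [e5, add_zero]
    have hp : p = conjV v₁ := by rw [← hcp, conjV_conjV]
    have hq : q = u := by rw [e4, add_zero]
    have hw : w = z := by rw [e7, add_zero]
    have hZ1 : Z₁' = Z₁ := by rw [e1, zero_add]
    have hZ2 : Z₂' = Z₂ := by rw [e2, zero_add]
    have hr : r = v - conjV v₁ := by rw [e3, hp]; abel
    have hs : s = u₁ - u := by rw [e6, hq]; abel
    have ha : a' = a := by rw [e8, zero_add]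
    ext1 <;> simp only
    · rw [hcp, hp, hq, hw]
    · rw [hZ1, hZ2, hr, hs, ha]

end Stmt12
end

section
/- Let n ≥ 1 and write (2n+2)×(2n+2) complex matrices in block form with respect to the decomposition 2n+2 = 1+n+1+n (blocks numbered 1,2,3,4). Define: 𝔨^⊥ as the set of matrices X with blocks X₁₁ = ia, X₁₂ = uᵀ, X₁₄ = v̄ᵀ, X₂₁ = −ū, X₂₃ = −v̄, X₂₄ = Z₁, X₃₂ = vᵀ, X₃₃ = −ia, X₃₄ = ūᵀ, X₄₁ = −v, X₄₂ = Z̄₁, X₄₃ = −u, all other blocks zero, where Z₁ = −Z₁ᵀ ∈ M_n(ℂ), a ∈ ℝ, u, v ∈ ℂⁿ; 𝔨₁ as the subset of such X with a = 0 and v = u (blocks X₁₂ = uᵀ, X₁₄ = ūᵀ, X₂₁ = −ū, X₂₃ = −ū, X₂₄ = Z₁, X₃₂ = uᵀ, X₃₄ = ūᵀ, X₄₁ = −u, X₄₂ = Z̄₁, X₄₃ = −u); and 𝔨₂ as the subset with Z₁ = 0 and v = 0 (blocks X₁₁ = ia, X₁₂ = u₁ᵀ, X₂₁ = −ū₁,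 X₃₃ = −ia, X₃₄ = ū₁ᵀ, X₄₃ = −u₁). Then 𝔨^⊥ is the internal direct sum of 𝔨₁ and 𝔨₂: every X ∈ 𝔨^⊥ is uniquely the sum of an element of 𝔨₁ and an element of 𝔨₂. -/
open Matrix

namespace Stmt13

/-- Entrywise complex conjugation of a matrix. -/
def mconj {α β : Type*} (M : Matrix α β ℂ) : Matrix α β ℂ := M.map (starRingEnd ℂ)

/-- Entrywise complex conjugation of a vector. -/
def conjV {m : ℕ} (v : Fin m → ℂ) : Fin m → ℂ := fun i => starRingEnd ℂ (v i)

/-- A vector as a column matrix. -/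
def colV {m : ℕ} (v : Fin m → ℂ) : Matrix (Fin m) Unit ℂ := Matrix.of fun i _ => v i

/-- A vector as a row matrix. -/
def rowV {m : ℕ} (v : Fin m → ℂ) : Matrix Unit (Fin m) ℂ := Matrix.of fun _ j => v j

/-- A scalar as a 1×1 matrix. -/
def scal (z : ℂ) : Matrix Unit Unit ℂ := Matrix.of fun _ _ => z

/-- A 4×4 block matrix with blocks of sizes `(1, n, 1, n)` (indices grouped as
`((Unit ⊕ Fin n) ⊕ (Unit ⊕ Fin n))`, blocks numbered 1,2,3,4). -/
def blk4 {m : ℕ}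
    (B11 : Matrix Unit Unit ℂ) (B12 : Matrix Unit (Fin m) ℂ)
    (B13 : Matrix Unit Unit ℂ) (B14 : Matrix Unit (Fin m) ℂ)
    (B21 : Matrix (Fin m) Unit ℂ) (B22 : Matrix (Fin m) (Fin m) ℂ)
    (B23 : Matrix (Fin m) Unit ℂ) (B24 : Matrix (Fin m) (Fin m) ℂ)
    (B31 : Matrix Unit Unit ℂ) (B32 : Matrix Unit (Fin m) ℂ)
    (B33 : Matrix Unit Unit ℂ) (B34 : Matrix Unit (Fin m) ℂ)
    (B41 : Matrix (Fin m) Unit ℂ) (B42 : Matrix (Fin m) (Fin m) ℂ)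
    (B43 : Matrix (Fin m) Unit ℂ) (B44 : Matrix (Fin m) (Fin m) ℂ) :
    Matrix ((Unit ⊕ Fin m) ⊕ (Unit ⊕ Fin m)) ((Unit ⊕ Fin m) ⊕ (Unit ⊕ Fin m)) ℂ :=
  fromBlocks (fromBlocks B11 B12 B21 B22) (fromBlocks B13 B14 B23 B24)
    (fromBlocks B31 B32 B41 B42) (fromBlocks B33 B34 B43 B44)

/-- The general matrix shape of elements of `𝔨^⊥ ⊆ 𝔰𝔬(2n+2)`, with blocks (w.r.t.
`2n+2 = 1+n+1+n`): `X₁₁ = ia`, `X₁₂ = uᵀ`, `X₁₄ = v̄ᵀ`, `X₂₁ = −ū`, `X₂₃ = −v̄`,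
`X₂₄ = Z₁`, `X₃₂ = vᵀ`, `X₃₃ = −ia`, `X₃₄ = ūᵀ`, `X₄₁ = −v`, `X₄₂ = Z̄₁`, `X₄₃ = −u`,
all other blocks zero. -/
def kperpM {m : ℕ} (Z₁ : Matrix (Fin m) (Fin m) ℂ) (a : ℝ) (u v : Fin m → ℂ) :
    Matrix ((Unit ⊕ Fin m) ⊕ (Unit ⊕ Fin m)) ((Unit ⊕ Fin m) ⊕ (Unit ⊕ Fin m)) ℂ :=
  blk4 (scal ((a : ℂ) * Complex.I)) (rowV u) 0 (rowV (conjV v))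
    (-colV (conjV u)) 0 (-colV (conjV v)) Z₁
    0 (rowV v) (scal (-((a : ℂ) * Complex.I))) (rowV (conjV u))
    (-colV v) (mconj Z₁) (-colV u) 0

/-- The subspace `𝔨^⊥`: matrices `kperpM Z₁ a u v` with `Z₁` skew-symmetric, `a ∈ ℝ`,
`u, v ∈ ℂⁿ`. -/
def kperp (m : ℕ) : Set (Matrix ((Unit ⊕ Fin m) ⊕ (Unit ⊕ Fin m))
    ((Unit ⊕ Fin m) ⊕ (Unit ⊕ Fin m)) ℂ) :=
  {X | ∃ (Z₁ : Matrix (Fin m) (Fin m) ℂ) (a : ℝ) (u v : Fin m → ℂ),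
    Z₁ = -Z₁ᵀ ∧ X = kperpM Z₁ a u v}

/-- The subspace `𝔨₁ = 𝔤₁ ∩ 𝔨^⊥`: elements of `𝔨^⊥` with `a = 0` and `v = u`. -/
def k1 (m : ℕ) : Set (Matrix ((Unit ⊕ Fin m) ⊕ (Unit ⊕ Fin m))
    ((Unit ⊕ Fin m) ⊕ (Unit ⊕ Fin m)) ℂ) :=
  {X | ∃ (Z₁ : Matrix (Fin m) (Fin m) ℂ) (u : Fin m → ℂ), Z₁ = -Z₁ᵀ ∧ X = kperpM Z₁ 0 u u}

/-- The subspace `𝔨₂ = 𝔤₂ ∩ 𝔨^⊥`: elements of `𝔨^⊥` with `Z₁ = 0` and `v = 0`. -/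
def k2 (m : ℕ) : Set (Matrix ((Unit ⊕ Fin m) ⊕ (Unit ⊕ Fin m))
    ((Unit ⊕ Fin m) ⊕ (Unit ⊕ Fin m)) ℂ) :=
  {X | ∃ (a : ℝ) (u₁ : Fin m → ℂ), X = kperpM 0 a u₁ 0}

set_option maxHeartbeats 2000000 in
lemma kperpM_add {m : ℕ} (Z Z' : Matrix (Fin m) (Fin m) ℂ) (a a' : ℝ)
    (u v u' v' : Fin m → ℂ) :
    kperpM Z a u v + kperpM Z' a' u' v' = kperpM (Z + Z') (a + a') (u + u') (v + v') := by
  ext i j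
  rcases i with (i | i) | (i | i) <;> rcases j with (j | j) | (j | j) <;>
    simp [kperpM, blk4, scal, rowV, colV, conjV, mconj, Matrix.fromBlocks,
      Matrix.add_apply, Pi.add_apply, map_add] <;> ring

lemma kperpM_inj {m : ℕ} {Z Z' : Matrix (Fin m) (Fin m) ℂ} {a a' : ℝ}
    {u v u' v' : Fin m → ℂ} (h : kperpM Z a u v = kperpM Z' a' u' v') :
    Z = Z' ∧ a = a' ∧ u = u' ∧ v = v' := by
  refine ⟨?_, ?_, ?_, ?_⟩
  · ext i j
    have := congrFun (congrFun h (Sum.inl (Sum.inr i))) (Sum.inr (Sum.inr j))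
    simpa [kperpM, blk4, Matrix.fromBlocks] using this
  · have := congrFun (congrFun h (Sum.inl (Sum.inl ()))) (Sum.inl (Sum.inl ()))
    simp [kperpM, blk4, scal, Matrix.fromBlocks] at this
    exact this
  · funext j
    have := congrFun (congrFun h (Sum.inl (Sum.inl ()))) (Sum.inl (Sum.inr j))
    simpa [kperpM, blk4, rowV, Matrix.fromBlocks] using this
  · funext j
    have := congrFun (congrFun h (Sum.inr (Sum.inl ()))) (Sum.inl (Sum.inr j))
    simpa [kperpM, blk4, rowV, Matrix.fromBlocks] using this

/-- `𝔨^⊥` is the internal direct sum of `𝔨₁` and `𝔨₂`: every `X ∈ 𝔨^⊥`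
is uniquely the sum of an element of `𝔨₁` and an element of `𝔨₂`. -/
theorem kperp_directSum_case_b (n : ℕ) (hn : 1 ≤ n) :
    ∀ X ∈ kperp n,
      ∃! p : Matrix ((Unit ⊕ Fin n) ⊕ (Unit ⊕ Fin n)) ((Unit ⊕ Fin n) ⊕ (Unit ⊕ Fin n)) ℂ ×
             Matrix ((Unit ⊕ Fin n) ⊕ (Unit ⊕ Fin n)) ((Unit ⊕ Fin n) ⊕ (Unit ⊕ Fin n)) ℂ,
        p.1 ∈ k1 n ∧ p.2 ∈ k2 n ∧ X = p.1 + p.2 := by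
  rintro X ⟨Z, a, u, v, hZ, rfl⟩
  refine ⟨(kperpM Z 0 v v, kperpM 0 a (u - v) 0), ⟨⟨Z, v, hZ, rfl⟩, ⟨a, u - v, rfl⟩, ?_⟩, ?_⟩
  · rw [kperpM_add]; simp
  · rintro ⟨Y1, Y2⟩ ⟨⟨Z', w, hZ', rfl⟩, ⟨b, u₁, rfl⟩, hsum⟩
    rw [kperpM_add] at hsum
    obtain ⟨h1, h2, h3, h4⟩ := kperpM_inj hsum
    simp only [add_zero, zero_add] at h1 h2 h3 h4
    subst h1 h4
    have : u₁ = u - v := by rw [h3]; abel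
    simp [this, ← h2]


end Stmt13
end

section
/- Let n ≥ 1 and write (2n+2)×(2n+2) complex matrices in block form with respect to the decomposition 2n+2 = 1+n+1+n (blocks numbered 1,2,3,4). Consider the subsets of M_{2n+2}(ℂ): 𝔤₁ = the set of matrices with blocks X₁₂ = uᵀ, X₁₄ = ūᵀ, X₂₁ = −ū, X₂₂ = W₁, X₂₃ = −ū, X₂₄ = Z₁, X₃₂ = uᵀ, X₃₄ = ūᵀ, X₄₁ = −u, X₄₂ = Z̄₁, X₄₃ = −u, X₄₄ = W̄₁, all other blocks zero, where W₁, Z₁ ∈ M_n(ℂ), W₁ = −W̄₁ᵀ, Z₁ = −Z₁ᵀ, u ∈ ℂⁿ (a realization of 𝔰𝔬(2n+1)); 𝔤₂ = {[[A, 0],[0, −Aᵀ]] (blocks of size n+1) : A ∈ M_{n+1}(ℂ), A = −Āᵀ} (a realization of 𝔲(n+1)); and 𝔨 = the set of matrices whose only possibly nonzero blocks are the (2,2)-block W₁ and the (4,4)-block W̄₁, where W₁ ∈ M_n(ℂ), W₁ = −W̄₁ᵀ (a realization of 𝔲(n)). Then 𝔤₁ ∩ 𝔤₂ = 𝔨.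 -/
open Matrix

namespace Stmt15

/-- Entrywise complex conjugation of a matrix. -/
def mconj {α β : Type*} (M : Matrix α β ℂ) : Matrix α β ℂ := M.map (starRingEnd ℂ)

/-- Entrywise complex conjugation of a vector. -/
def conjV {m : ℕ} (v : Fin m → ℂ) : Fin m → ℂ := fun i => starRingEnd ℂ (v i)

/-- A vector as a column matrix. -/
def colV {m : ℕ} (v : Fin m → ℂ) : Matrix (Fin m) Unit ℂ := Matrix.of fun i _ => v i

/-- A vector as a row matrix. -/
def rowV {m : ℕ} (v : Fin m → ℂ) : Matrix Unit (Fin m) ℂ := Matrix.of fun _ j => v j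

/-- A 4×4 block matrix with blocks of sizes `(1, n, 1, n)`. -/
def blk4 {m : ℕ}
    (B11 : Matrix Unit Unit ℂ) (B12 : Matrix Unit (Fin m) ℂ)
    (B13 : Matrix Unit Unit ℂ) (B14 : Matrix Unit (Fin m) ℂ)
    (B21 : Matrix (Fin m) Unit ℂ) (B22 : Matrix (Fin m) (Fin m) ℂ)
    (B23 : Matrix (Fin m) Unit ℂ) (B24 : Matrix (Fin m) (Fin m) ℂ)
    (B31 : Matrix Unit Unit ℂ) (B32 : Matrix Unit (Fin m) ℂ)
    (B33 : Matrix Unit Unit ℂ) (B34 : Matrix Unit (Fin m) ℂ)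
    (B41 : Matrix (Fin m) Unit ℂ) (B42 : Matrix (Fin m) (Fin m) ℂ)
    (B43 : Matrix (Fin m) Unit ℂ) (B44 : Matrix (Fin m) (Fin m) ℂ) :
    Matrix ((Unit ⊕ Fin m) ⊕ (Unit ⊕ Fin m)) ((Unit ⊕ Fin m) ⊕ (Unit ⊕ Fin m)) ℂ :=
  fromBlocks (fromBlocks B11 B12 B21 B22) (fromBlocks B13 B14 B23 B24)
    (fromBlocks B31 B32 B41 B42) (fromBlocks B33 B34 B43 B44)

/-- The index type: `2n+2` indices, decomposed as `1 + n + 1 + n`. -/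
abbrev Idx (m : ℕ) := (Unit ⊕ Fin m) ⊕ (Unit ⊕ Fin m)

/-- `𝔤₁ ≅ 𝔰𝔬(2n+1)`: matrices with blocks (w.r.t. `2n+2 = 1+n+1+n`) `X₁₂ = uᵀ`,
`X₁₄ = ūᵀ`, `X₂₁ = −ū`, `X₂₂ = W₁`, `X₂₃ = −ū`, `X₂₄ = Z₁`, `X₃₂ = uᵀ`, `X₃₄ = ūᵀ`,
`X₄₁ = −u`, `X₄₂ = Z̄₁`, `X₄₃ = −u`, `X₄₄ = W̄₁`, all other blocks zero, where `W₁` is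
skew-Hermitian, `Z₁` skew-symmetric, `u ∈ ℂⁿ`. -/
def g1 (m : ℕ) : Set (Matrix (Idx m) (Idx m) ℂ) :=
  {X | ∃ (W₁ Z₁ : Matrix (Fin m) (Fin m) ℂ) (u : Fin m → ℂ),
    W₁ = -(mconj W₁)ᵀ ∧ Z₁ = -Z₁ᵀ ∧
    X = blk4 0 (rowV u) 0 (rowV (conjV u))
          (-colV (conjV u)) W₁ (-colV (conjV u)) Z₁
          0 (rowV u) 0 (rowV (conjV u))
          (-colV u) (mconj Z₁) (-colV u) (mconj W₁)}

/-- `𝔤₂ ≅ 𝔲(n+1)`: matrices `[[A, 0],[0, −Aᵀ]]` (blocks of size `n+1 = 1+n`) with `A`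
skew-Hermitian. -/
def g2 (m : ℕ) : Set (Matrix (Idx m) (Idx m) ℂ) :=
  {X | ∃ A : Matrix (Unit ⊕ Fin m) (Unit ⊕ Fin m) ℂ,
    A = -(mconj A)ᵀ ∧ X = fromBlocks A 0 0 (-Aᵀ)}

/-- `𝔨 ≅ 𝔲(n)`: matrices whose only possibly nonzero blocks are `X₂₂ = W₁` and
`X₄₄ = W̄₁`, with `W₁` skew-Hermitian. -/
def kk (m : ℕ) : Set (Matrix (Idx m) (Idx m) ℂ) :=
  {X | ∃ W₁ : Matrix (Fin m) (Fin m) ℂ,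
    W₁ = -(mconj W₁)ᵀ ∧
    X = blk4 0 0 0 0
          0 W₁ 0 0
          0 0 0 0
          0 0 0 (mconj W₁)}

lemma mconj_zero {α β : Type*} : mconj (0 : Matrix α β ℂ) = 0 := by
  ext i j; simp [mconj]

lemma conjV_zero {m : ℕ} : conjV (0 : Fin m → ℂ) = 0 := by
  funext i; simp [conjV]

lemma rowV_zero {m : ℕ} : rowV (0 : Fin m → ℂ) = 0 := by
  ext i j; simp [rowV]

lemma colV_zero {m : ℕ} : colV (0 : Fin m → ℂ) = 0 := by
  ext i j; simp [colV]

lemma mconj_of_skew {m : ℕ} {W : Matrix (Fin m) (Fin m) ℂ}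
    (h : W = -(mconj W)ᵀ) : mconj W = -Wᵀ := by
  conv_lhs => rw [h]
  ext i j
  simp [mconj]

/-- In `M_{2n+2}(ℂ)`, the intersection of the realizations
`𝔤₁ ≅ 𝔰𝔬(2n+1)` and `𝔤₂ ≅ 𝔲(n+1)` equals the realization `𝔨 ≅ 𝔲(n)`. -/
theorem g1_inter_g2_eq_k_case_b (n : ℕ) (hn : 1 ≤ n) :
    g1 n ∩ g2 n = kk n := by
  ext X
  constructor
  · rintro ⟨⟨W₁, Z₁, u, hW, hZ, hX1⟩, ⟨A, hA, hX2⟩⟩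
    -- compare the off-diagonal big blocks to deduce u = 0 and Z₁ = 0
    have hE : blk4 0 (rowV u) 0 (rowV (conjV u))
          (-colV (conjV u)) W₁ (-colV (conjV u)) Z₁
          0 (rowV u) 0 (rowV (conjV u))
          (-colV u) (mconj Z₁) (-colV u) (mconj W₁)
        = fromBlocks A 0 0 (-Aᵀ) := by rw [← hX1, hX2]
    unfold blk4 at hE
    have h12 := congrArg Matrix.toBlocks₁₂ hE
    simp only [Matrix.toBlocks_fromBlocks₁₂] at h12
    have h21 := congrArg Matrix.toBlocks₂₁ hE
    simp only [Matrix.toBlocks_fromBlocks₂₁] at h21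
    have hu : u = 0 := by
      have h := congrArg Matrix.toBlocks₂₁ h21
      simp only [Matrix.toBlocks_fromBlocks₂₁] at h
      funext i
      have := congrFun (congrFun h i) ()
      simpa [colV, Matrix.toBlocks₂₁] using this
    have hZ0 : Z₁ = 0 := by
      have h := congrArg Matrix.toBlocks₂₂ h12
      simp only [Matrix.toBlocks_fromBlocks₂₂] at h
      ext i j
      have := congrFun (congrFun h i) j
      simpa [Matrix.toBlocks₂₂] using this
    refine ⟨W₁, hW, ?_⟩
    rw [hX1, hu, hZ0]
    simp [conjV_zero, rowV_zero, colV_zero, mconj_zero]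
  · rintro ⟨W₁, hW, hX⟩
    refine ⟨⟨W₁, 0, 0, hW, by simp, ?_⟩,
      ⟨fromBlocks 0 0 0 W₁, ?_, ?_⟩⟩
    · rw [hX]; simp [conjV_zero, rowV_zero, colV_zero, mconj_zero]
    · have : mconj (fromBlocks (0 : Matrix Unit Unit ℂ) 0 0 W₁)
          = fromBlocks 0 0 0 (mconj W₁) := by
        ext i j
        rcases i with i | i <;> rcases j with j | j <;>
          simp [mconj, Matrix.fromBlocks]
      rw [this, Matrix.fromBlocks_transpose]
      rw [mconj_of_skew hW]
      ext i j
      rcases i with i | i <;> rcases j with j | j <;>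
        simp [Matrix.fromBlocks]
    · rw [hX]
      unfold blk4
      rw [mconj_of_skew hW]
      ext i j
      rcases i with (i | i) | (i | i) <;> rcases j with (j | j) | (j | j) <;>
        simp [Matrix.fromBlocks]

end Stmt15
end
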